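/- If the system is cyclo-dissipative with respect to x*, reachable from x* and controllable to x* with concatenation, then both S_{ac} and S_{rc} are (real-valued) storage functions, i.e., each satisfies the dissipation inequality along all trajectories; consequently the system is cyclo-dissipative (along all cycles, not only those through x*). -/

import Mathlib

open Set Filter

/-- An abstract system: a set of trajectories, each recorded as
(initial state, final state, integral of the supply rate along the trajectory). -/
structure Sys (X : Type) where
  Traj : Set (X × X × ℝ)

/-- `S` is a storage function: the dissipation inequality holds along all trajectories. -/
def IsStorage {X : Type} (P : Sys X) (S : X → ℝ) : Prop :=
  ∀ τ ∈ P.Traj, S τ.2.1 ≤ S τ.1 + τ.2.2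

/-- Cyclo-dissipativity: the supply integral is nonnegative along every cyclic trajectory. -/
def CycloDiss {X : Type} (P : Sys X) : Prop :=
  ∀ τ ∈ P.Traj, τ.2.1 = τ.1 → 0 ≤ τ.2.2

/-- Cyclo-dissipativity with respect to the ground state `xs`. -/
def CycloDissAt {X : Type} (P : Sys X) (xs : X) : Prop :=
  ∀ r : ℝ, (xs, xs, r) ∈ P.Traj → 0 ≤ r

/-- Available storage `S_a(x)`: sup of `-∫ s` over trajectories starting at `x`. -/
noncomputable def Sa {X : Type} (P : Sys X) (x : X) : EReal :=
  sSup {e : EReal | ∃ y r, (x, y, r) ∈ P.Traj ∧ e = ((-r : ℝ) : EReal)}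

/-- Required supply `S_r(x)`: inf of `∫ s` over trajectories ending at `x`. -/
noncomputable def Sr {X : Type} (P : Sys X) (x : X) : EReal :=
  sInf {e : EReal | ∃ y r, (y, x, r) ∈ P.Traj ∧ e = ((r : ℝ) : EReal)}

/-- Constrained available storage `S_{ac}(x)` w.r.t. ground state `xs`:
sup of `-∫ s` over trajectories from `x` to `xs`. -/
noncomputable def Sac {X : Type} (P : Sys X) (xs x : X) : EReal :=
  sSup {e : EReal | ∃ r, (x, xs, r) ∈ P.Traj ∧ e = ((-r : ℝ) : EReal)}

/-- Constrained required supply `S_{rc}(x)` w.r.t. ground state `xs`: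
inf of `∫ s` over trajectories from `xs` to `x`. -/
noncomputable def Src {X : Type} (P : Sys X) (xs x : X) : EReal :=
  sInf {e : EReal | ∃ r, (xs, x, r) ∈ P.Traj ∧ e = ((r : ℝ) : EReal)}

/-- Trajectories can be concatenated, supply integrals adding up. -/
def HasConcat {X : Type} (P : Sys X) : Prop :=
  ∀ x y z r₁ r₂, (x, y, r₁) ∈ P.Traj → (y, z, r₂) ∈ P.Traj → (x, z, r₁ + r₂) ∈ P.Traj

/-- Every state admits the trivial trajectory of duration zero. -/
def HasTrivial {X : Type} (P : Sys X) : Prop := ∀ x, (x, x, (0:ℝ)) ∈ P.Traj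

/-- Every state is reachable from `xs`. -/
def ReachableFrom {X : Type} (P : Sys X) (xs : X) : Prop := ∀ x, ∃ r, (xs, x, r) ∈ P.Traj

/-- Every state can be steered to `xs`. -/
def ControllableTo {X : Type} (P : Sys X) (xs : X) : Prop := ∀ x, ∃ r, (x, xs, r) ∈ P.Traj

/-- S_ac and S_rc are real-valued storage functions; hence cyclo-dissipativity. -/
theorem stmt8 {X : Type} (P : Sys X) (xs : X) (hcd : CycloDissAt P xs)
    (hR : ReachableFrom P xs) (hC : ControllableTo P xs) (hcat : HasConcat P) :
    (∀ x : X, Sac P xs x ≠ ⊥ ∧ Sac P xs x ≠ ⊤ ∧ Src P xs x ≠ ⊥ ∧ Src P xs x ≠ ⊤) ∧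
    IsStorage P (fun x => (Sac P xs x).toReal) ∧
    IsStorage P (fun x => (Src P xs x).toReal) ∧
    CycloDiss P := by
  -- finiteness
  have hfin : ∀ x : X, Sac P xs x ≠ ⊥ ∧ Sac P xs x ≠ ⊤ ∧ Src P xs x ≠ ⊥ ∧ Src P xs x ≠ ⊤ := by
    intro x
    obtain ⟨ra, hra⟩ := hC x
    obtain ⟨rr, hrr⟩ := hR x
    have h1 : ((-ra : ℝ) : EReal) ≤ Sac P xs x := le_sSup ⟨ra, hra, rfl⟩
    have h2 : Sac P xs x ≤ ((rr : ℝ) : EReal) := by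
      apply sSup_le
      rintro e ⟨r, hr, rfl⟩
      have := hcd (rr + r) (hcat xs x xs rr r hrr hr)
      exact_mod_cast (by linarith : (-r : ℝ) ≤ rr)
    have h3 : Src P xs x ≤ ((rr : ℝ) : EReal) := sInf_le ⟨rr, hrr, rfl⟩
    have h4 : ((-ra : ℝ) : EReal) ≤ Src P xs x := by
      apply le_sInf
      rintro e ⟨s, hs, rfl⟩
      have := hcd (s + ra) (hcat xs x xs s ra hs hra)
      exact_mod_cast (by linarith : (-ra : ℝ) ≤ s)
    refine ⟨?_, ?_, ?_, ?_⟩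
    · exact fun h => by simp [h] at h1
    · exact fun h => by simp [h] at h2
    · exact fun h => by simp [h] at h4
    · exact fun h => by simp [h] at h3
  -- EReal dissipation inequalities
  have hSacE : ∀ x y r, (x, y, r) ∈ P.Traj →
      Sac P xs y ≤ Sac P xs x + (r : EReal) := by
    intro x y r hxy
    apply sSup_le
    rintro e ⟨s, hs, rfl⟩
    have hmem : ((-(r + s) : ℝ) : EReal) ≤ Sac P xs x :=
      le_sSup ⟨r + s, hcat x y xs r s hxy hs, rfl⟩
    calc ((-s : ℝ) : EReal) = ((-(r + s) : ℝ) : EReal) + (r : EReal) := by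
            rw [← EReal.coe_add]; norm_num
      _ ≤ Sac P xs x + (r : EReal) := add_le_add_left hmem _
  have hSrcE : ∀ x y r, (x, y, r) ∈ P.Traj →
      Src P xs y ≤ Src P xs x + (r : EReal) := by
    intro x y r hxy
    rw [← EReal.sub_le_iff_le_add (.inl (EReal.coe_ne_bot r)) (.inl (EReal.coe_ne_top r))]
    apply le_sInf
    rintro e ⟨s, hs, rfl⟩
    rw [EReal.sub_le_iff_le_add (.inl (EReal.coe_ne_bot r)) (.inl (EReal.coe_ne_top r))]
    exact sInf_le ⟨s + r, hcat xs x y s r hs hxy, by exact_mod_cast rfl⟩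
  -- real versions
  have hSac : IsStorage P (fun x => (Sac P xs x).toReal) := by
    rintro ⟨x, y, r⟩ hτ
    obtain ⟨hb, ht, -, -⟩ := hfin x
    obtain ⟨hb', ht', -, -⟩ := hfin y
    have := EReal.toReal_le_toReal (hSacE x y r hτ) hb'
      (EReal.add_lt_top ht (EReal.coe_ne_top r)).ne
    rwa [EReal.toReal_add ht hb (EReal.coe_ne_top r) (EReal.coe_ne_bot r),
      EReal.toReal_coe] at this
  have hSrc : IsStorage P (fun x => (Src P xs x).toReal) := by
    rintro ⟨x, y, r⟩ hτ
    obtain ⟨-, -, hb, ht⟩ := hfin x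
    obtain ⟨-, -, hb', ht'⟩ := hfin y
    have := EReal.toReal_le_toReal (hSrcE x y r hτ) hb'
      (EReal.add_lt_top ht (EReal.coe_ne_top r)).ne
    rwa [EReal.toReal_add ht hb (EReal.coe_ne_top r) (EReal.coe_ne_bot r),
      EReal.toReal_coe] at this
  refine ⟨hfin, hSac, hSrc, ?_⟩
  rintro ⟨x, y, r⟩ hτ hxy
  dsimp at hxy; subst hxy
  have := hSac _ hτ
  simp at this
  linarith
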